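/- Let (A,X) and (B,Y) be featured graphs on n vertices admitting a common stable partition: stable partitions P₁,…,P_k of (A,X) and Q₁,…,Q_k of (B,Y) with |P_t| = |Q_t| = n_t, all vertices in P_t ∪ Q_t sharing the same feature, and |N_G(u) ∩ P_l| = |N_H(v) ∩ Q_l| for all u ∈ P_t, v ∈ Q_t and all t, l. Then there exists a doubly stochastic matrix S with A·S = S·B and Σ_{i,j} S_{i,j}·‖X_i − Y_j‖ = 0; concretely, after relabeling vertices so that each P_t and Q_t occupies the same consecutive block of indices, S = (1/n₁)J_{n₁} ⊕ ⋯ ⊕ (1/n_k)J_{n_k} works, where J_m is the m×m all-ones matrix. Consequently d((A,X),(B,Y)) = 0. -/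
import Mathlib


/-- A featured graph on `n` vertices: an adjacency matrix of a simple graph
(symmetric, 0/1 entries, zero diagonal) together with node features in `ℝ^d`. -/
structure FeaturedGraph (n d : ℕ) where
  A : Matrix (Fin n) (Fin n) ℝ
  X : Fin n → EuclideanSpace ℝ (Fin d)
  isSymm : A.IsSymm
  zeroOne : ∀ i j, A i j = 0 ∨ A i j = 1
  loopless : ∀ i, A i i = 0

open Classical in
/-- The neighbor set of `u` in the simple graph with adjacency matrix `A`. -/
noncomputable def nbrs {n : ℕ} (A : Matrix (Fin n) (Fin n) ℝ) (u : Fin n) : Finset (Fin n) :=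
  Finset.univ.filter fun z => A u z = 1

/-- A stable partition of a featured graph: a partition of the vertices into
nonempty parts such that vertices in the same part have the same feature and the
same number of neighbors in every part. -/
def IsStablePartition {n d k : ℕ} (G : FeaturedGraph n d) (P : Fin k → Finset (Fin n)) : Prop :=
  (∀ t, (P t).Nonempty) ∧ (∀ i : Fin n, ∃! t, i ∈ P t) ∧
    ∀ t, ∀ u ∈ P t, ∀ v ∈ P t, G.X u = G.X v ∧
      ∀ l, (nbrs G.A u ∩ P l).card = (nbrs G.A v ∩ P l).card

/-- The ℓ² operator norm of a square real matrix. -/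
noncomputable def l2OpNorm {n : ℕ} (M : Matrix (Fin n) (Fin n) ℝ) : ℝ :=
  ‖Matrix.toEuclideanCLM (𝕜 := ℝ) M‖

/-- The graph pseudo-metric: the infimum over doubly stochastic `S` of
`‖A·S − S·B‖ + Σ_{i,j} S_{i,j} ‖X_i − Y_j‖`. -/
noncomputable def graphDist {n d : ℕ} (G H : FeaturedGraph n d) : ℝ :=
  sInf {r | ∃ S ∈ doublyStochastic ℝ (Fin n),
    r = l2OpNorm (G.A * S - S * H.A) + ∑ i, ∑ j, S i j * ‖G.X i - H.X j‖}

/-- If two featured graphs admit a common stable partition, then there is a doubly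
stochastic matrix `S` with `A·S = S·B` whose feature transport cost vanishes;
consequently the graph pseudo-metric between the two graphs is `0`. -/
private lemma double_count_aux {n : ℕ} (A : Matrix (Fin n) (Fin n) ℝ) (hA : A.IsSymm)
    (s t : Finset (Fin n)) :
    ∑ u ∈ t, ((nbrs A u) ∩ s).card = ∑ w ∈ s, ((nbrs A w) ∩ t).card := by
  classical
  have h1 : ∀ (u : Fin n) (r : Finset (Fin n)),
      ((nbrs A u) ∩ r).card = ∑ w ∈ r, if A u w = 1 then 1 else 0 := by
    intro u r
    rw [← Finset.card_filter]
    congr 1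
    ext z
    simp [nbrs, Finset.mem_filter, and_comm]
  simp only [h1]
  rw [Finset.sum_comm]
  refine Finset.sum_congr rfl fun w _ => Finset.sum_congr rfl fun u _ => ?_
  have : A u w = A w u := by
    conv_lhs => rw [← hA]
    rfl
  rw [this]

private lemma sum_row_card {n : ℕ} (A : Matrix (Fin n) (Fin n) ℝ)
    (h01 : ∀ i j, A i j = 0 ∨ A i j = 1) (u : Fin n) (s : Finset (Fin n)) :
    ∑ z ∈ s, A u z = (((nbrs A u) ∩ s).card : ℝ) := by
  classical
  have h1 : ((nbrs A u) ∩ s).card = ∑ w ∈ s, if A u w = 1 then 1 else 0 := by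
    rw [← Finset.card_filter]
    congr 1
    ext z
    simp [nbrs, Finset.mem_filter, and_comm]
  rw [h1]
  push_cast
  refine Finset.sum_congr rfl fun z _ => ?_
  rcases h01 u z with h | h <;> simp [h]

theorem commonStablePartition_graphDist_eq_zero {n d k : ℕ}
    (G H : FeaturedGraph n d) (P Q : Fin k → Finset (Fin n))
    (hP : IsStablePartition G P) (hQ : IsStablePartition H Q)
    (hcard : ∀ t, (P t).card = (Q t).card)
    (hfeat : ∀ t, ∀ u ∈ P t, ∀ v ∈ Q t, G.X u = H.X v)
    (hdeg : ∀ t l, ∀ u ∈ P t, ∀ v ∈ Q t,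
      (nbrs G.A u ∩ P l).card = (nbrs H.A v ∩ Q l).card) :
    (∃ S ∈ doublyStochastic ℝ (Fin n),
        G.A * S = S * H.A ∧ ∑ i, ∑ j, S i j * ‖G.X i - H.X j‖ = 0) ∧
      graphDist G H = 0 := by
  classical
  obtain ⟨hPne, hPuniq, hPstab⟩ := hP
  obtain ⟨hQne, hQuniq, hQstab⟩ := hQ
  -- assign each vertex its part
  set τ : Fin n → Fin k := fun i => (hPuniq i).exists.choose with hτdef
  have hτ : ∀ i, i ∈ P (τ i) := fun i => (hPuniq i).exists.choose_spec
  set σ : Fin n → Fin k := fun j => (hQuniq j).exists.choose with hσdef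
  have hσ : ∀ j, j ∈ Q (σ j) := fun j => (hQuniq j).exists.choose_spec
  have hτeq : ∀ i t, i ∈ P t → τ i = t := by
    intro i t ht
    exact ((hPuniq i).unique (hτ i) ht)
  have hσeq : ∀ j t, j ∈ Q t → σ j = t := by
    intro j t ht
    exact ((hQuniq j).unique (hσ j) ht)
  have hPpos : ∀ t, 0 < (P t).card := fun t => Finset.card_pos.2 (hPne t)
  have hQpos : ∀ t, 0 < (Q t).card := fun t => Finset.card_pos.2 (hQne t)
  -- the block matrix
  set S : Matrix (Fin n) (Fin n) ℝ :=
    fun i j => if j ∈ Q (τ i) then ((P (τ i)).card : ℝ)⁻¹ else 0 with hSdef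
  have hSrow : ∀ i j, S i j = if j ∈ Q (τ i) then ((P (τ i)).card : ℝ)⁻¹ else 0 :=
    fun i j => rfl
  have hScol : ∀ i j, S i j = if i ∈ P (σ j) then ((P (σ j)).card : ℝ)⁻¹ else 0 := by
    intro i j
    by_cases hi : i ∈ P (σ j)
    · have : τ i = σ j := hτeq i _ hi
      simp [hSrow, this, hσ j, hi]
    · have hne : τ i ≠ σ j := fun h => hi (h ▸ hτ i)
      have hj : j ∉ Q (τ i) := fun hj => hne (((hσeq j _ hj)).symm)
      simp [hSrow, hj, hi]
  have hSmem : S ∈ doublyStochastic ℝ (Fin n) := by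
    rw [mem_doublyStochastic_iff_sum]
    refine ⟨fun i j => ?_, fun i => ?_, fun j => ?_⟩
    · rw [hSrow _ _]
      split
      · positivity
      · exact le_refl 0
    · have : ∑ j, S i j = ∑ j ∈ Q (τ i), ((P (τ i)).card : ℝ)⁻¹ := by
        rw [Finset.sum_ite_mem, Finset.univ_inter]
      rw [this, Finset.sum_const, nsmul_eq_mul, hcard (τ i)]
      field_simp
    · have : ∑ i, S i j = ∑ i ∈ P (σ j), ((P (σ j)).card : ℝ)⁻¹ := by
        simp_rw [hScol]
        rw [Finset.sum_ite_mem, Finset.univ_inter]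
      rw [this, Finset.sum_const, nsmul_eq_mul]
      field_simp
  -- commutation
  have hcomm : G.A * S = S * H.A := by
    ext u j
    have hL : (G.A * S) u j
        = ((nbrs G.A u ∩ P (σ j)).card : ℝ) * ((P (σ j)).card : ℝ)⁻¹ := by
      rw [Matrix.mul_apply]
      have : ∀ z, G.A u z * S z j
          = if z ∈ P (σ j) then G.A u z * ((P (σ j)).card : ℝ)⁻¹ else 0 := by
        intro z
        rw [hScol]
        split <;> simp
      simp_rw [this]
      rw [Finset.sum_ite_mem, Finset.univ_inter, ← Finset.sum_mul,
        sum_row_card G.A G.zeroOne]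
    have hR : (S * H.A) u j
        = ((nbrs H.A j ∩ Q (τ u)).card : ℝ) * ((P (τ u)).card : ℝ)⁻¹ := by
      rw [Matrix.mul_apply]
      have : ∀ z, S u z * H.A z j
          = if z ∈ Q (τ u) then H.A j z * ((P (τ u)).card : ℝ)⁻¹ else 0 := by
        intro z
        rw [hSrow _ _]
        have hs : H.A z j = H.A j z := by
          conv_lhs => rw [← H.isSymm]
          rfl
        split <;> simp [hs, mul_comm]
      simp_rw [this]
      rw [Finset.sum_ite_mem, Finset.univ_inter, ← Finset.sum_mul,
        sum_row_card H.A H.zeroOne]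
    rw [hL, hR]
    -- key combinatorial identity
    obtain ⟨v, hv⟩ := hQne (τ u)
    have h1 : (nbrs G.A u ∩ P (σ j)).card = (nbrs H.A v ∩ Q (σ j)).card :=
      hdeg (τ u) (σ j) u (hτ u) v hv
    -- double counting in H between Q (τ u) and Q (σ j)
    have h2 : (Q (τ u)).card * (nbrs H.A v ∩ Q (σ j)).card
        = (Q (σ j)).card * (nbrs H.A j ∩ Q (τ u)).card := by
      have e1 : ∑ z ∈ Q (τ u), ((nbrs H.A z) ∩ Q (σ j)).card
          = (Q (τ u)).card * (nbrs H.A v ∩ Q (σ j)).card := by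
        rw [Finset.sum_congr rfl fun z hz => (hQstab (τ u) z hz v hv).2 (σ j),
          Finset.sum_const, smul_eq_mul]
      have e2 : ∑ w ∈ Q (σ j), ((nbrs H.A w) ∩ Q (τ u)).card
          = (Q (σ j)).card * (nbrs H.A j ∩ Q (τ u)).card := by
        rw [Finset.sum_congr rfl fun w hw => (hQstab (σ j) w hw j (hσ j)).2 (τ u),
          Finset.sum_const, smul_eq_mul]
      rw [← e1, ← e2, double_count_aux H.A H.isSymm]
    rw [h1]
    have hc1 : ((P (σ j)).card : ℝ) = ((Q (σ j)).card : ℝ) := by exact_mod_cast hcard _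
    have hc2 : ((P (τ u)).card : ℝ) = ((Q (τ u)).card : ℝ) := by exact_mod_cast hcard _
    rw [hc1, hc2]
    have h2' : ((Q (τ u)).card : ℝ) * ((nbrs H.A v ∩ Q (σ j)).card : ℝ)
        = ((Q (σ j)).card : ℝ) * ((nbrs H.A j ∩ Q (τ u)).card : ℝ) := by
      exact_mod_cast h2
    have hq1 : ((Q (σ j)).card : ℝ) ≠ 0 := by exact Nat.cast_ne_zero.2 (hQpos (σ j)).ne'
    field_simp
    linarith [h2']
  -- feature transport cost is zero
  have hcost : ∑ i, ∑ j, S i j * ‖G.X i - H.X j‖ = 0 := by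
    refine Finset.sum_eq_zero fun i _ => Finset.sum_eq_zero fun j _ => ?_
    rw [hSrow _ _]
    split
    · rename_i hj
      have : G.X i = H.X j := hfeat (τ i) i (hτ i) j hj
      rw [this]
      simp
    · simp
  refine ⟨⟨S, hSmem, hcomm, hcost⟩, ?_⟩
  -- graphDist = 0
  have h0mem : (0 : ℝ) ∈ {r | ∃ S ∈ doublyStochastic ℝ (Fin n),
      r = l2OpNorm (G.A * S - S * H.A) + ∑ i, ∑ j, S i j * ‖G.X i - H.X j‖} := by
    refine ⟨S, hSmem, ?_⟩
    have hz : l2OpNorm (0 : Matrix (Fin n) (Fin n) ℝ) = 0 := by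
      simp only [l2OpNorm, map_zero, norm_zero]
    rw [hcomm, sub_self, hcost, hz, add_zero]
  have hlb : ∀ r ∈ {r | ∃ S ∈ doublyStochastic ℝ (Fin n),
      r = l2OpNorm (G.A * S - S * H.A) + ∑ i, ∑ j, S i j * ‖G.X i - H.X j‖}, (0:ℝ) ≤ r := by
    rintro r ⟨T, hT, rfl⟩
    have h1 : 0 ≤ l2OpNorm (G.A * T - T * H.A) := norm_nonneg _
    have h2 : 0 ≤ ∑ i, ∑ j, T i j * ‖G.X i - H.X j‖ := by
      refine Finset.sum_nonneg fun i _ => Finset.sum_nonneg fun j _ => ?_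
      exact mul_nonneg (nonneg_of_mem_doublyStochastic hT) (norm_nonneg _)
    linarith
  unfold graphDist
  exact le_antisymm (csInf_le ⟨0, hlb⟩ h0mem) (le_csInf ⟨0, h0mem⟩ hlb)
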